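/- arXiv:1312.5018 — 2 statements merged into one kernel-verified Lean document; each statement's English description precedes it below -/
import Mathlib

section
/- If f belongs to the model space K_u and θ is an inner function such that f/θ ∈ H², then f/θ also belongs to K_u. -/
open Complex MeasureTheory

noncomputable section

instance : Fact (0 < 2 * Real.pi) := ⟨by positivity⟩

/-- The circle, as `ℝ / 2πℤ`. -/
abbrev Circ := AddCircle (2 * Real.pi)

/-- Normalized Lebesgue (Haar) measure `m` on the circle. -/
abbrev mC : Measure Circ := AddCircle.haarAddCircle

/-- The Lebesgue space `L²(𝕋, m)`. -/
abbrev L2C := MeasureTheory.Lp ℂ 2 mC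

/-- The identity coordinate `ζ = e^{iθ}` on the circle. -/
def zeta (x : Circ) : ℂ := fourier 1 x

/-- The `L²` inner product `⟨f, g⟩ = ∫ f conj(g) dm`, on the level of functions. -/
def ip (f g : Circ → ℂ) : ℂ := ∫ x, f x * (starRingEnd ℂ) (g x) ∂mC

/-- A boundary function belongs to `H²` (as a subspace of `L²`) when all of its
negatively indexed Fourier coefficients vanish. -/
def memH2 (f : Circ → ℂ) : Prop := ∀ n : ℤ, n < 0 → fourierCoeff f n = 0

/-- The boundary function of an inner function: measurable, unimodular a.e.,
and of analytic type (negative Fourier coefficients vanish). -/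
def BdryInner (u : Circ → ℂ) : Prop :=
  AEStronglyMeasurable u mC ∧ (∀ᵐ x ∂mC, ‖u x‖ = 1) ∧ memH2 u

/-- Membership in the model space `K_u = H² ⊖ uH²`: `f ∈ H²` and `f ⟂ uH²`. -/
def memKu (u : Circ → ℂ) (f : L2C) : Prop :=
  memH2 ⇑f ∧ ∀ h : L2C, memH2 ⇑h → ip ⇑f (fun x => u x * h x) = 0

/-- Multiplication by a bounded analytic-type function preserves `H²` (key lemma). -/
lemma mul_memH2 (θ : Circ → ℂ) (hθm : AEStronglyMeasurable θ mC)
    (hθn : ∀ᵐ x ∂mC, ‖θ x‖ = 1) (hθ2 : memH2 θ)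
    (h : L2C) (hh : memH2 ⇑h) (n : ℤ) (hn : n < 0) :
    fourierCoeff (fun x => θ x * h x) n = 0 := by
  -- the functional v ↦ n-th Fourier coefficient of θ·v is inner with w
  have hwmem : MemLp (fun x => (starRingEnd ℂ) (fourier (-n) x * θ x)) 2 mC := by
    refine MemLp.of_le (memLp_const (1 : ℂ)) ?_ ?_
    · exact continuous_star.comp_aestronglyMeasurable
        ((map_continuous (fourier (-n))).aestronglyMeasurable.mul hθm)
    · filter_upwards [hθn] with x hx
      simp [Circle.norm_coe, hx]
  set w : L2C := hwmem.toLp _ with hw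
  have hwcoe := hwmem.coeFn_toLp
  have h1 : (inner ℂ w h : ℂ) = fourierCoeff (fun x => θ x * (h : Circ → ℂ) x) n := by
    rw [MeasureTheory.L2.inner_def, fourierCoeff]
    refine integral_congr_ae ?_
    filter_upwards [hwcoe] with x hx
    rw [RCLike.inner_apply, hx]
    simp [smul_eq_mul]
    ring
  have h2 : (inner ℂ w h : ℂ) = 0 := by
    have hsum := hasSum_fourier_series_L2 h
    have hmap := (innerSL ℂ w).hasSum hsum
    have hzero : ∀ k : ℤ,
        (innerSL ℂ w) (fourierCoeff (⇑h) k • fourierLp 2 k) = 0 := by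
      intro k
      rcases lt_or_ge k 0 with hk | hk
      · rw [hh k hk]; simp
      · have hwk : (inner ℂ w (fourierLp (T := 2 * Real.pi) 2 k) : ℂ)
            = fourierCoeff θ (n - k) := by
          rw [MeasureTheory.L2.inner_def, fourierCoeff]
          refine integral_congr_ae ?_
          filter_upwards [hwcoe, coeFn_fourierLp (T := 2 * Real.pi) 2 k] with x hx hx2
          rw [RCLike.inner_apply, hx, hx2]
          have : (fourier (-(n - k)) x : ℂ) = fourier (-n) x * fourier k x := by
            rw [show -(n - k) = -n + k by ring, fourier_add]
          simp only [smul_eq_mul, this, map_mul, RingHomCompTriple.comp_apply,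
            RingHom.id_apply, starRingEnd_self_apply]
          ring
        have hθc : fourierCoeff θ (n - k) = 0 := hθ2 _ (by omega)
        rw [innerSL_apply_apply, inner_smul_right, hwk, hθc, mul_zero]
    have h0 : HasSum (fun _ : ℤ => (0 : ℂ)) ((innerSL ℂ w) h) :=
      hmap.congr_fun fun k => (hzero k).symm
    have := h0.unique hasSum_zero
    simpa using this
  rw [← h1, h2]

/-- If `f ∈ K_u` and `θ` is an inner function dividing `f`, i.e.
`f/θ = g ∈ H²` (equivalently `f = θ·g` a.e. on the circle), then `f/θ ∈ K_u`. -/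
theorem stmt_8 (u θ : Circ → ℂ) (hu : BdryInner u) (hθ : BdryInner θ)
    (f g : L2C) (hf : memKu u f) (hg : memH2 ⇑g)
    (hdiv : ∀ᵐ x ∂mC, f x = θ x * g x) :
    memKu u g := by
  obtain ⟨hθm, hθn, hθ2⟩ := hθ
  refine ⟨hg, fun h hh => ?_⟩
  have hmem : MemLp (fun x => θ x * h x) 2 mC := by
    refine MemLp.of_le (Lp.memLp h) (hθm.mul (Lp.aestronglyMeasurable h)) ?_
    filter_upwards [hθn] with x hx
    simp [hx]
  set H : L2C := hmem.toLp _ with hHdef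
  have hHcoe := hmem.coeFn_toLp
  have hH2 : memH2 ⇑H := by
    intro n hn
    have : fourierCoeff (⇑H) n = fourierCoeff (fun x => θ x * h x) n := by
      refine integral_congr_ae ?_
      filter_upwards [hHcoe] with x hx
      rw [hx]
    rw [this]
    exact mul_memH2 θ hθm hθn hθ2 h hh n hn
  have hperp := hf.2 H hH2
  rw [ip] at hperp ⊢
  rw [← hperp]
  refine integral_congr_ae ?_
  filter_upwards [hdiv, hθn, hHcoe] with x hx1 hx2 hx3
  rw [hx1, hx3]
  have hθ1 : θ x * (starRingEnd ℂ) (θ x) = 1 := by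
    rw [Complex.mul_conj]
    norm_cast
    rw [Complex.normSq_eq_norm_sq]
    simp [hx2]
  simp only [map_mul]
  calc g x * ((starRingEnd ℂ) (u x) * (starRingEnd ℂ) (h x))
      = (θ x * (starRingEnd ℂ) (θ x)) * (g x * ((starRingEnd ℂ) (u x) * (starRingEnd ℂ) (h x))) := by
        rw [hθ1, one_mul]
    _ = θ x * g x * ((starRingEnd ℂ) (u x) * ((starRingEnd ℂ) (θ x) * (starRingEnd ℂ) (h x))) := by ring
end
end

section
/- Let u be an inner function with u(0) = 0, and for α ∈ 𝕋 define U_α = S_u + α(1 ⊗ u/z) on K_u, where S_u f = P_u(zf) is the compressed shift and (1 ⊗ u/z)f = ⟨f, u/z⟩·1. Then U_α is a unitary operator on K_u. -/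
open Complex MeasureTheory

noncomputable section

/-- `ClarkRel u α f g` says `g = U_α f = P_u(zf) + α⟨f, u/z⟩·1`, characterized by
having the correct inner products against every member of `K_u`. -/
def ClarkRel (u : Circ → ℂ) (α : ℂ) (f g : L2C) : Prop :=
  ∀ k : L2C, memKu u k →
    ip ⇑g ⇑k = ip (fun x => zeta x * f x) ⇑k
      + α * ip ⇑f (fun x => u x * (starRingEnd ℂ) (zeta x)) * ip (fun _ => (1 : ℂ)) ⇑k

namespace ClarkAux
open scoped ComplexConjugate

local notation "⟪" x ", " y "⟫" => @inner ℂ _ _ x y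

lemma zeta_norm (x : Circ) : ‖zeta x‖ = 1 := by
  simpa [zeta] using Circle.norm_coe _

lemma zeta_mul_conj (x : Circ) : zeta x * conj (zeta x) = 1 := by
  rw [Complex.mul_conj]
  norm_cast
  rw [Complex.normSq_eq_norm_sq, zeta_norm]; norm_num

lemma fourierCoeff_def (f : Circ → ℂ) (n : ℤ) :
    fourierCoeff f n = ∫ x, fourier (-n) x * f x ∂mC := rfl

lemma ip_congr_left {f f' g : Circ → ℂ} (h : f =ᵐ[mC] f') : ip f g = ip f' g :=
  integral_congr_ae (h.mono fun _ hx => by simp only [hx])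

lemma ip_congr_right {f g g' : Circ → ℂ} (h : g =ᵐ[mC] g') : ip f g = ip f g' :=
  integral_congr_ae (h.mono fun _ hx => by simp only [hx])

lemma coeff_congr {f f' : Circ → ℂ} (h : f =ᵐ[mC] f') (n : ℤ) :
    fourierCoeff f n = fourierCoeff f' n := by
  rw [fourierCoeff_def, fourierCoeff_def]
  exact integral_congr_ae (h.mono fun _ hx => by simp only [hx])

lemma memH2_congr {f f' : Circ → ℂ} (h : f =ᵐ[mC] f') (hf : memH2 f) : memH2 f' :=
  fun n hn => (coeff_congr h n).symm.trans (hf n hn)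

lemma ip_conj (f g : Circ → ℂ) : ip f g = conj (ip g f) := by
  rw [ip, ip, ← integral_conj]
  congr 1; funext x; rw [map_mul]; ring_nf; rw [Complex.conj_conj]; ring

lemma ip_L2 (f g : L2C) : ip ⇑f ⇑g = ⟪g, f⟫ := by
  rw [MeasureTheory.L2.inner_def, ip]
  congr 1

lemma inner_L2_tsum (f g : L2C) :
    ⟪f, g⟫ = ∑' n : ℤ, conj (fourierCoeff (⇑f) n) * fourierCoeff (⇑g) n := by
  rw [← fourierBasis.repr.inner_map_map f g, lp.inner_eq_tsum]
  congr 1; funext n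
  rw [RCLike.inner_apply, fourierBasis_repr, fourierBasis_repr]; ring

lemma ip_tsum {f g : Circ → ℂ} (hf : MemLp f 2 mC) (hg : MemLp g 2 mC) :
    ip f g = ∑' n : ℤ, conj (fourierCoeff g n) * fourierCoeff f n := by
  rw [ip_congr_left (hf.coeFn_toLp).symm, ip_congr_right (hg.coeFn_toLp).symm,
    ip_L2 (hf.toLp f) (hg.toLp g), inner_L2_tsum]
  congr 1; funext n
  rw [coeff_congr hg.coeFn_toLp, coeff_congr hf.coeFn_toLp]

lemma intg_fourier_mul {f : Circ → ℂ} (hf : Integrable f mC) (m : ℤ) :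
    Integrable (fun x => fourier m x * f x) mC :=
  hf.bdd_mul (map_continuous (fourier m)).aestronglyMeasurable
    (Filter.Eventually.of_forall (fun x => by simpa using (Circle.norm_coe _).le))

lemma coeff_add {f g : Circ → ℂ} (hf : Integrable f mC) (hg : Integrable g mC) (n : ℤ) :
    fourierCoeff (fun x => f x + g x) n = fourierCoeff f n + fourierCoeff g n := by
  simp only [fourierCoeff_def, mul_add]
  exact integral_add (intg_fourier_mul hf _) (intg_fourier_mul hg _)

lemma coeff_sub {f g : Circ → ℂ} (hf : Integrable f mC) (hg : Integrable g mC) (n : ℤ) :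
    fourierCoeff (fun x => f x - g x) n = fourierCoeff f n - fourierCoeff g n := by
  simp only [fourierCoeff_def, mul_sub]
  exact integral_sub (intg_fourier_mul hf _) (intg_fourier_mul hg _)

lemma coeff_cmul (c : ℂ) (f : Circ → ℂ) (n : ℤ) :
    fourierCoeff (fun x => c * f x) n = c * fourierCoeff f n := by
  simp only [fourierCoeff_def, show ∀ x, fourier (-n) x * (c * f x) = c * (fourier (-n) x * f x)
    from fun x => by ring]
  exact integral_const_mul c _

lemma integral_fourier (m : ℤ) :
    ∫ x, fourier m x ∂mC = if m = 0 then 1 else 0 := by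
  have h := orthonormal_iff_ite.mp (orthonormal_fourier (T := 2 * Real.pi)) (-m) 0
  rw [MeasureTheory.L2.inner_def] at h
  rw [show (∫ x, fourier m x ∂mC) = ∫ x, ⟪(fourierLp (T := 2 * Real.pi) 2 (-m)) x,
      (fourierLp (T := 2 * Real.pi) 2 0) x⟫ ∂mC from ?_, h]
  · simp [neg_eq_zero]
  · refine integral_congr_ae ?_
    filter_upwards [coeFn_fourierLp (T := 2 * Real.pi) 2 (-m), coeFn_fourierLp (T := 2 * Real.pi) 2 0]
      with x h1 h2
    rw [h1, h2, RCLike.inner_apply, ← fourier_neg, neg_neg, fourier_zero, one_mul]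

lemma coeff_one (n : ℤ) :
    fourierCoeff (fun _ : Circ => (1 : ℂ)) n = if n = 0 then 1 else 0 := by
  rw [fourierCoeff_def]
  simp only [mul_one]
  rw [integral_fourier]
  simp [neg_eq_zero]

lemma coeff_const (c : ℂ) (n : ℤ) :
    fourierCoeff (fun _ : Circ => c) n = if n = 0 then c else 0 := by
  have := coeff_cmul c (fun _ : Circ => (1 : ℂ)) n
  simp only [mul_one] at this
  rw [this, coeff_one]
  split <;> simp

lemma coeff_zeta_mul (f : Circ → ℂ) (n : ℤ) :
    fourierCoeff (fun x => zeta x * f x) n = fourierCoeff f (n - 1) := by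
  rw [fourierCoeff_def, fourierCoeff_def]
  congr 1; funext x
  rw [← mul_assoc, zeta, ← fourier_add]
  congr 2; ring

lemma conj_zeta_eq (x : Circ) : conj (zeta x) = fourier (-1) x := by
  rw [fourier_neg]; rfl

lemma coeff_conj_zeta_mul (f : Circ → ℂ) (n : ℤ) :
    fourierCoeff (fun x => conj (zeta x) * f x) n = fourierCoeff f (n + 1) := by
  rw [fourierCoeff_def, fourierCoeff_def]
  congr 1; funext x
  rw [conj_zeta_eq, ← mul_assoc, ← fourier_add]
  congr 2; ring

lemma coeff_conj (f : Circ → ℂ) (n : ℤ) :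
    fourierCoeff (fun x => conj (f x)) n = conj (fourierCoeff f (-n)) := by
  rw [fourierCoeff_def, fourierCoeff_def, ← integral_conj]
  congr 1; funext x
  rw [map_mul, ← fourier_neg, neg_neg]

lemma memLp_bdd_mul {w f : Circ → ℂ} (hw : AEStronglyMeasurable w mC)
    (hw1 : ∀ᵐ x ∂mC, ‖w x‖ ≤ 1) (hf : MemLp f 2 mC) :
    MemLp (fun x => w x * f x) 2 mC := by
  refine hf.of_le (hw.mul hf.aestronglyMeasurable) ?_
  filter_upwards [hw1] with x hx
  rw [norm_mul]
  nlinarith [norm_nonneg (f x)]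

lemma zeta_aesm : AEStronglyMeasurable (fun x : Circ => zeta x) mC :=
  (map_continuous (fourier 1)).aestronglyMeasurable

lemma conj_zeta_aesm : AEStronglyMeasurable (fun x : Circ => conj (zeta x)) mC := by
  simp only [conj_zeta_eq]
  exact (map_continuous (fourier (-1))).aestronglyMeasurable

lemma memLp_zeta_mul {f : Circ → ℂ} (hf : MemLp f 2 mC) :
    MemLp (fun x => zeta x * f x) 2 mC :=
  memLp_bdd_mul zeta_aesm (Filter.Eventually.of_forall fun x => (zeta_norm x).le) hf

lemma memLp_conj_zeta_mul {f : Circ → ℂ} (hf : MemLp f 2 mC) :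
    MemLp (fun x => conj (zeta x) * f x) 2 mC :=
  memLp_bdd_mul conj_zeta_aesm
    (Filter.Eventually.of_forall fun x => by rw [RCLike.norm_conj, zeta_norm]) hf

lemma memLp_conj {f : Circ → ℂ} (hf : MemLp f 2 mC) :
    MemLp (fun x => conj (f x)) 2 mC := by
  refine hf.of_le (RCLike.continuous_conj.comp_aestronglyMeasurable hf.aestronglyMeasurable) ?_
  filter_upwards with x
  rw [RCLike.norm_conj]

lemma intg_mul_conj {f g : Circ → ℂ} (hf : MemLp f 2 mC) (hg : MemLp g 2 mC) :
    Integrable (fun x => f x * conj (g x)) mC := by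
  have h := MeasureTheory.L2.integrable_inner (𝕜 := ℂ) (hg.toLp g) (hf.toLp f)
  refine h.congr ?_
  filter_upwards [hg.coeFn_toLp, hf.coeFn_toLp] with x h1 h2
  rw [RCLike.inner_apply, h1, h2, mul_comm]

lemma ip_add_left {f₁ f₂ g : Circ → ℂ} (h₁ : MemLp f₁ 2 mC) (h₂ : MemLp f₂ 2 mC)
    (hg : MemLp g 2 mC) :
    ip (fun x => f₁ x + f₂ x) g = ip f₁ g + ip f₂ g := by
  simp only [ip, add_mul]
  exact integral_add (intg_mul_conj h₁ hg) (intg_mul_conj h₂ hg)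

lemma ip_sub_left {f₁ f₂ g : Circ → ℂ} (h₁ : MemLp f₁ 2 mC) (h₂ : MemLp f₂ 2 mC)
    (hg : MemLp g 2 mC) :
    ip (fun x => f₁ x - f₂ x) g = ip f₁ g - ip f₂ g := by
  simp only [ip, sub_mul]
  exact integral_sub (intg_mul_conj h₁ hg) (intg_mul_conj h₂ hg)

lemma ip_cmul_left (c : ℂ) (f g : Circ → ℂ) :
    ip (fun x => c * f x) g = c * ip f g := by
  simp only [ip, mul_assoc]
  exact integral_const_mul c _

lemma ip_const_left (a : ℂ) (g : Circ → ℂ) :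
    ip (fun _ => a) g = a * ip (fun _ => (1 : ℂ)) g := by
  rw [← ip_cmul_left]
  congr 1; funext x; rw [mul_one]

lemma int_zf (f : Circ → ℂ) : ∫ x, zeta x * f x ∂mC = fourierCoeff f (-1) := by
  rw [fourierCoeff_def]
  simp only [neg_neg]
  rfl

lemma unimod_conj_mul {a : ℂ} (ha : ‖a‖ = 1) : conj a * a = 1 := by
  rw [mul_comm, Complex.mul_conj]
  norm_cast
  rw [Complex.normSq_eq_norm_sq, ha]; norm_num

section main

variable {u : Circ → ℂ}

lemma uL2 (hu : BdryInner u) : MemLp u 2 mC :=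
  MemLp.of_bound hu.1 1 (hu.2.1.mono fun _ hx => hx.le)

lemma u_mul_conj_ae (hu : BdryInner u) : ∀ᵐ x ∂mC, conj (u x) * u x = 1 :=
  hu.2.1.mono fun x hx => unimod_conj_mul hx

lemma memLp_u_mul (hu : BdryInner u) {f : Circ → ℂ} (hf : MemLp f 2 mC) :
    MemLp (fun x => u x * f x) 2 mC :=
  memLp_bdd_mul hu.1 (hu.2.1.mono fun _ hx => hx.le) hf

lemma integral_inner_mul {v h : Circ → ℂ} (hv2 : memH2 v) (hv0 : fourierCoeff v 0 = 0)
    (hvL : MemLp v 2 mC) (hh : MemLp h 2 mC) (hh2 : memH2 h) :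
    ∫ x, v x * h x ∂mC = 0 := by
  have e1 : (∫ x, v x * h x ∂mC) = ip h (fun x => conj (v x)) := by
    rw [ip]; congr 1; funext x; rw [Complex.conj_conj]; ring
  rw [e1, ip_tsum hh (memLp_conj hvL)]
  have hz : ∀ n : ℤ, conj (fourierCoeff (fun x => conj (v x)) n) * fourierCoeff h n = 0 := by
    intro n
    rw [coeff_conj, Complex.conj_conj]
    rcases lt_trichotomy n 0 with hn | hn | hn
    · rw [hh2 n hn, mul_zero]
    · rw [hn, neg_zero, hv0, zero_mul]
    · rw [hv2 (-n) (by omega), zero_mul]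
  rw [tsum_congr hz, tsum_zero]

lemma int_uh (hu : BdryInner u) (hu0 : fourierCoeff u 0 = 0) {h : Circ → ℂ}
    (hh : MemLp h 2 mC) (hh2 : memH2 h) : ∫ x, u x * h x ∂mC = 0 :=
  integral_inner_mul hu.2.2 hu0 (uL2 hu) hh hh2

lemma int_zuh (hu : BdryInner u) {h : Circ → ℂ}
    (hh : MemLp h 2 mC) (hh2 : memH2 h) : ∫ x, zeta x * (u x * h x) ∂mC = 0 := by
  have e : (∫ x, zeta x * (u x * h x) ∂mC) = ∫ x, (fun y => zeta y * u y) x * h x ∂mC := by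
    congr 1; funext x; ring
  rw [e]
  refine integral_inner_mul ?_ ?_ (memLp_zeta_mul (uL2 hu)) hh hh2
  · intro n hn
    rw [coeff_zeta_mul, hu.2.2 (n - 1) (by omega)]
  · rw [coeff_zeta_mul]
    exact hu.2.2 (0 - 1) (by norm_num)

lemma ip_one_one : ip (fun _ : Circ => (1 : ℂ)) (fun _ => (1 : ℂ)) = 1 := by
  simp [ip]

lemma ip_u_one (hu0 : fourierCoeff u 0 = 0) : ip u (fun _ => (1 : ℂ)) = 0 := by
  have e : ip u (fun _ => (1 : ℂ)) = fourierCoeff u 0 := by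
    rw [ip, fourierCoeff_def]
    congr 1; funext x
    simp [fourier_zero]
  rw [e, hu0]

lemma ip_one_u (hu0 : fourierCoeff u 0 = 0) : ip (fun _ => (1 : ℂ)) u = 0 := by
  rw [ip_conj, ip_u_one hu0, map_zero]

lemma ip_u_u (hu : BdryInner u) : ip u u = 1 := by
  rw [ip]
  have e : (∫ x, u x * conj (u x) ∂mC) = ∫ _x, (1 : ℂ) ∂mC := by
    refine integral_congr_ae ?_
    filter_upwards [u_mul_conj_ae hu] with x hx
    rw [mul_comm] at hx
    simp only [hx]
  rw [e]; simp

lemma ip_zf_one {f : Circ → ℂ} (hf2 : memH2 f) :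
    ip (fun x => zeta x * f x) (fun _ => (1 : ℂ)) = 0 := by
  rw [ip]
  simp only [map_one, mul_one]
  rw [int_zf, hf2 (-1) (by norm_num)]

lemma ip_zf_u (f : Circ → ℂ) :
    ip (fun x => zeta x * f x) u = ip f (fun x => u x * conj (zeta x)) := by
  rw [ip, ip]; congr 1; funext x
  simp only [map_mul, Complex.conj_conj]; ring

lemma ip_zf_zf (f : Circ → ℂ) :
    ip (fun x => zeta x * f x) (fun x => zeta x * f x) = ip f f := by
  rw [ip, ip]; congr 1; funext x
  rw [map_mul]
  calc zeta x * f x * (conj (zeta x) * conj (f x))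
      = zeta x * conj (zeta x) * (f x * conj (f x)) := by ring
    _ = f x * conj (f x) := by rw [zeta_mul_conj, one_mul]

lemma memLp_zeta : MemLp (fun x : Circ => zeta x) 2 mC :=
  MemLp.of_bound zeta_aesm 1 (Filter.Eventually.of_forall fun x => (zeta_norm x).le)

lemma one_L2 : MemLp (fun _ : Circ => (1 : ℂ)) 2 mC := memLp_const 1

lemma memH2_one : memH2 (fun _ : Circ => (1 : ℂ)) := by
  intro n hn
  rw [coeff_one, if_neg (by omega)]

lemma ip_memKu_u (hu : BdryInner u) {k : L2C} (hk : memKu u k) : ip ⇑k u = 0 := by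
  set oneL : L2C := one_L2.toLp _ with honeL
  have hco : ⇑oneL =ᵐ[mC] fun _ => (1 : ℂ) := one_L2.coeFn_toLp
  have h1 := hk.2 oneL (memH2_congr hco.symm memH2_one)
  rw [← h1]
  refine ip_congr_right ?_
  filter_upwards [hco] with x hx
  rw [hx, mul_one]

lemma ip_u_memKu (hu : BdryInner u) {k : L2C} (hk : memKu u k) : ip u ⇑k = 0 := by
  rw [ip_conj, ip_memKu_u hu hk, map_zero]

end main

section fwd
variable {u : Circ → ℂ}

lemma forward (hu : BdryInner u) (hu0 : fourierCoeff u 0 = 0) {f : L2C} (hf : memKu u f)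
    (α : ℂ) (hα : ‖α‖ = 1) :
    ∃ g : L2C, (memKu u g ∧ ClarkRel u α f g) ∧ ‖g‖ = ‖f‖ := by
  classical
  set c : ℂ := ip ⇑f (fun x => u x * conj (zeta x)) with hc
  have hfL : MemLp (⇑f) 2 mC := Lp.memLp f
  have hzf : MemLp (fun x => zeta x * ⇑f x) 2 mC := memLp_zeta_mul hfL
  have huL : MemLp u 2 mC := uL2 hu
  have hcu : MemLp (fun x => c * u x) 2 mC := huL.const_mul c
  have hca : MemLp (fun _ : Circ => c * α) 2 mC := memLp_const _
  have huzb : MemLp (fun x => u x * conj (zeta x)) 2 mC :=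
    memLp_u_mul hu (memLp_conj memLp_zeta)
  set G : Circ → ℂ := fun x => (zeta x * ⇑f x + c * α) - c * u x with hG
  have hGL : MemLp G 2 mC := by
    rw [hG]; exact (hzf.add hca).sub hcu
  set g : L2C := hGL.toLp G with hgdef
  have hg : ⇑g =ᵐ[mC] G := hGL.coeFn_toLp
  -- coefficients of G
  have coeffG : ∀ n : ℤ, fourierCoeff G n
      = fourierCoeff ⇑f (n - 1) + (if n = 0 then c * α else 0) - c * fourierCoeff u n := by
    intro n
    rw [hG, coeff_sub (by exact (hzf.add hca).integrable one_le_two)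
        (by exact hcu.integrable one_le_two),
      coeff_add (by exact hzf.integrable one_le_two) (by exact hca.integrable one_le_two),
      coeff_zeta_mul, coeff_const, coeff_cmul]
  have hGH2 : memH2 G := by
    intro n hn
    rw [coeffG n, hf.1 (n - 1) (by omega), hu.2.2 n hn, if_neg (by omega)]
    ring
  -- the perpendicularity
  have hperp : ∀ h : L2C, memH2 ⇑h → ip ⇑g (fun x => u x * h x) = 0 := by
    intro h hh2
    have hhL : MemLp ⇑h 2 mC := Lp.memLp h
    have huh : MemLp (fun x => u x * ⇑h x) 2 mC := memLp_u_mul hu hhL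
    set c0 : ℂ := fourierCoeff ⇑h 0 with hc0
    set h1 : Circ → ℂ := fun x => conj (zeta x) * (⇑h x - c0) with hh1
    have hh1L : MemLp h1 2 mC := by
      rw [hh1]; exact memLp_conj_zeta_mul (hhL.sub (memLp_const c0))
    have huh1 : MemLp (fun x => u x * h1 x) 2 mC := memLp_u_mul hu hh1L
    have hh1H2 : memH2 h1 := by
      intro n hn
      rw [hh1, coeff_conj_zeta_mul,
        coeff_sub (by exact hhL.integrable one_le_two) (integrable_const c0), coeff_const]
      by_cases h0 : n + 1 = 0
      · rw [if_pos h0, h0, hc0, sub_self]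
      · rw [if_neg h0, hh2 (n + 1) (by omega), sub_zero]
    set h1L : L2C := hh1L.toLp h1 with hh1Ldef
    have hh1c : ⇑h1L =ᵐ[mC] h1 := hh1L.coeFn_toLp
    have key0 := hf.2 h1L (memH2_congr hh1c.symm hh1H2)
    have key : ip ⇑f (fun x => u x * h1 x) = 0 := by
      rw [← key0]
      refine ip_congr_right ?_
      filter_upwards [hh1c] with x hx
      rw [hx]
    rw [ip_congr_left hg, hG]
    rw [ip_sub_left (by exact hzf.add hca) hcu huh, ip_add_left hzf hca huh]
    -- term 1
    have t1 : ip (fun x => zeta x * ⇑f x) (fun x => u x * ⇑h x)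
        = conj c0 * c + ip ⇑f (fun x => u x * h1 x) := by
      have pe : ∀ x, zeta x * ⇑f x * conj (u x * ⇑h x)
          = conj c0 * (⇑f x * conj (u x * conj (zeta x))) + ⇑f x * conj (u x * h1 x) := by
        intro x
        simp only [hh1, map_mul, map_sub, Complex.conj_conj]
        ring
      rw [ip, integral_congr_ae (Filter.Eventually.of_forall pe),
        integral_add ((intg_mul_conj hfL huzb).const_mul _) (intg_mul_conj hfL huh1),
        integral_const_mul, hc]
      rfl
    -- term 2
    have t2 : ip (fun _ : Circ => c * α) (fun x => u x * ⇑h x) = 0 := by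
      rw [ip, integral_const_mul]
      have : (∫ x, conj (u x * ⇑h x) ∂mC) = conj (∫ x, u x * ⇑h x ∂mC) := integral_conj
      rw [this, int_uh hu hu0 hhL hh2, map_zero, mul_zero]
    -- term 3
    have t3 : ip u (fun x => u x * ⇑h x) = conj c0 := by
      have e1 : ip u (fun x => u x * ⇑h x) = ∫ x, conj (⇑h x) ∂mC := by
        rw [ip]
        refine integral_congr_ae ?_
        filter_upwards [u_mul_conj_ae hu] with x hx
        rw [map_mul]
        calc u x * (conj (u x) * conj (⇑h x))
            = conj (u x) * u x * conj (⇑h x) := by ring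
          _ = conj (⇑h x) := by rw [hx, one_mul]
      have e2 : fourierCoeff ⇑h 0 = ∫ x, ⇑h x ∂mC := by
        rw [fourierCoeff_def]
        congr 1; funext x
        simp [fourier_zero]
      rw [e1, integral_conj, hc0, e2]
    have t3' : ip (fun x => c * u x) (fun x => u x * ⇑h x) = c * conj c0 := by
      rw [ip_cmul_left, t3]
    rw [t1, key, t2, t3']
    ring
  -- ClarkRel
  have hclark : ClarkRel u α f g := by
    intro k hk
    have hkL : MemLp ⇑k 2 mC := Lp.memLp k
    have e1 : ip (fun x => c * u x) ⇑k = 0 := by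
      rw [ip_cmul_left, ip_u_memKu hu hk, mul_zero]
    have e2 : ip (fun _ : Circ => c * α) ⇑k = c * α * ip (fun _ => (1 : ℂ)) ⇑k :=
      ip_const_left _ _
    rw [ip_congr_left hg, hG, ip_sub_left (by exact hzf.add hca) hcu hkL,
      ip_add_left hzf hca hkL, e1, e2, sub_zero, ← hc]
    ring
  -- norm
  have hαα : α * conj α = 1 := by
    rw [mul_comm]; exact unimod_conj_mul hα
  have expandG : ∀ X : Circ → ℂ, MemLp X 2 mC →
      ip G X = ip (fun x => zeta x * ⇑f x) X + (c * α) * ip (fun _ => (1 : ℂ)) X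
        - c * ip u X := by
    intro X hX
    have e1 : ip (fun x => c * u x) X = c * ip u X := ip_cmul_left _ _ _
    have e2 : ip (fun _ : Circ => c * α) X = c * α * ip (fun _ => (1 : ℂ)) X :=
      ip_const_left _ _
    rw [hG, ip_sub_left (by exact hzf.add hca) hcu hX, ip_add_left hzf hca hX, e1, e2]
  have ip_zfu : ip (fun x => zeta x * ⇑f x) u = c := by rw [ip_zf_u, ← hc]
  have ipGzf : ip G (fun x => zeta x * ⇑f x) = ip ⇑f ⇑f - c * conj c := by
    rw [expandG _ hzf, ip_zf_zf]
    have h1 : ip (fun _ : Circ => (1 : ℂ)) (fun x => zeta x * ⇑f x) = 0 := by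
      rw [ip_conj, ip_zf_one hf.1, map_zero]
    have h2 : ip u (fun x => zeta x * ⇑f x) = conj c := by
      rw [ip_conj, ip_zfu]
    rw [h1, h2, mul_zero, add_zero]
  have ipG1 : ip G (fun _ : Circ => (1 : ℂ)) = c * α := by
    rw [expandG _ one_L2, ip_zf_one hf.1, ip_one_one, ip_u_one hu0, mul_zero, sub_zero,
      mul_one, zero_add]
  have ipGu : ip G u = 0 := by
    rw [expandG _ huL, ip_zfu, ip_one_u hu0, ip_u_u hu, mul_zero, add_zero, mul_one, sub_self]
  have ipGG : ip G G = ip ⇑f ⇑f := by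
    rw [expandG G hGL]
    have e1 : ip (fun x => zeta x * ⇑f x) G = conj (ip G (fun x => zeta x * ⇑f x)) :=
      ip_conj _ _
    have e2 : ip (fun _ : Circ => (1 : ℂ)) G = conj (ip G (fun _ : Circ => (1 : ℂ))) :=
      ip_conj _ _
    have e3 : ip u G = conj (ip G u) := ip_conj _ _
    rw [e1, e2, e3, ipGzf, ipG1, ipGu, map_zero, mul_zero, sub_zero, map_sub, map_mul]
    have hre : conj (ip ⇑f ⇑f) = ip ⇑f ⇑f := (ip_conj (⇑f) (⇑f)).symm
    rw [hre, map_mul, Complex.conj_conj]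
    calc ip ⇑f ⇑f - conj c * c + c * α * (conj c * conj α)
        = ip ⇑f ⇑f - conj c * c + (α * conj α) * (c * conj c) := by ring
      _ = ip ⇑f ⇑f := by rw [hαα]; ring
  have hnorm : ‖g‖ = ‖f‖ := by
    have hig : (inner ℂ g g : ℂ) = inner ℂ f f := by
      rw [← ip_L2 g g, ← ip_L2 f f, ip_congr_left hg, ip_congr_right hg, ipGG]
    rw [inner_self_eq_norm_sq_to_K (𝕜 := ℂ), inner_self_eq_norm_sq_to_K (𝕜 := ℂ)] at hig
    have : ‖g‖ ^ 2 = ‖f‖ ^ 2 := by exact_mod_cast hig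
    nlinarith [norm_nonneg g, norm_nonneg f]
  exact ⟨g, ⟨⟨memH2_congr hg.symm hGH2, hperp⟩, hclark⟩, hnorm⟩

end fwd

section rest
variable {u : Circ → ℂ}

lemma unique (hu : BdryInner u) {α : ℂ} {f g g' : L2C} (hg : memKu u g) (hg' : memKu u g')
    (h1 : ClarkRel u α f g) (h2 : ClarkRel u α f g') : g = g' := by
  have hsub : ⇑(g - g') =ᵐ[mC] fun x => ⇑g x - ⇑g' x := Lp.coeFn_sub g g'
  have hgL : MemLp (⇑g) 2 mC := Lp.memLp g
  have hg'L : MemLp (⇑g') 2 mC := Lp.memLp g'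
  have hkH2 : memH2 ⇑(g - g') := by
    intro n hn
    rw [coeff_congr hsub n,
      coeff_sub (by exact hgL.integrable one_le_two) (by exact hg'L.integrable one_le_two),
      hg.1 n hn, hg'.1 n hn, sub_zero]
  have hkperp : ∀ h : L2C, memH2 ⇑h → ip ⇑(g - g') (fun x => u x * h x) = 0 := by
    intro h hh
    rw [ip_congr_left hsub,
      ip_sub_left hgL hg'L (memLp_u_mul hu (Lp.memLp h)), hg.2 h hh, hg'.2 h hh, sub_zero]
  have hkmem : memKu u (g - g') := ⟨hkH2, hkperp⟩
  have e : ip ⇑g ⇑(g - g') = ip ⇑g' ⇑(g - g') := (h1 _ hkmem).trans (h2 _ hkmem).symm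
  have hz : ip ⇑(g - g') ⇑(g - g') = 0 := by
    rw [ip_congr_left hsub, ip_sub_left hgL hg'L (Lp.memLp _), e, sub_self]
  rw [ip_L2] at hz
  have : g - g' = 0 := inner_self_eq_zero.mp hz
  exact sub_eq_zero.mp this

lemma backward (hu : BdryInner u) (hu0 : fourierCoeff u 0 = 0) {g : L2C} (hg : memKu u g)
    (α : ℂ) (hα : ‖α‖ = 1) :
    ∃ f : L2C, memKu u f ∧ ClarkRel u α f g := by
  classical
  have hgL : MemLp (⇑g) 2 mC := Lp.memLp g
  have huL : MemLp u 2 mC := uL2 hu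
  have hαα : conj α * α = 1 := unimod_conj_mul hα
  set c : ℂ := conj α * fourierCoeff ⇑g 0 with hc
  set W : Circ → ℂ := fun x => (⇑g x - c * α) + c * u x with hW
  have hWL : MemLp W 2 mC := by
    rw [hW]; exact (hgL.sub (memLp_const _)).add (huL.const_mul c)
  set F : Circ → ℂ := fun x => conj (zeta x) * W x with hF
  have hFL : MemLp F 2 mC := by rw [hF]; exact memLp_conj_zeta_mul hWL
  set fL : L2C := hFL.toLp F with hfLdef
  have hfc : ⇑fL =ᵐ[mC] F := hFL.coeFn_toLp
  -- H² membership
  have hFH2 : memH2 F := by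
    intro n hn
    rw [hF, coeff_conj_zeta_mul, hW,
      coeff_add (by exact (hgL.sub (memLp_const _)).integrable one_le_two)
        (by exact (huL.const_mul c).integrable one_le_two),
      coeff_sub (by exact hgL.integrable one_le_two) (integrable_const _),
      coeff_const, coeff_cmul]
    by_cases h0 : n + 1 = 0
    · rw [if_pos h0, h0, hu0, hc]
      calc fourierCoeff ⇑g 0 - conj α * fourierCoeff ⇑g 0 * α + conj α * fourierCoeff ⇑g 0 * 0
          = fourierCoeff ⇑g 0 * (1 - conj α * α) := by ring
        _ = 0 := by rw [hαα, sub_self, mul_zero]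
    · rw [if_neg h0, hg.1 (n + 1) (by omega), hu.2.2 (n + 1) (by omega)]
      ring
  -- perpendicularity
  have hperp : ∀ h : L2C, memH2 ⇑h → ip ⇑fL (fun x => u x * h x) = 0 := by
    intro h hh
    have hhL : MemLp (⇑h) 2 mC := Lp.memLp h
    have huh : MemLp (fun x => u x * ⇑h x) 2 mC := memLp_u_mul hu hhL
    rw [ip_congr_left hfc]
    have pe : F =ᵐ[mC] fun x =>
        (conj (zeta x) * ⇑g x - (c * α) * conj (zeta x)) + c * (conj (zeta x) * u x) := by
      filter_upwards with x
      rw [hF, hW]; ring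
    have hA : MemLp (fun x => conj (zeta x) * ⇑g x) 2 mC := memLp_conj_zeta_mul hgL
    have hB : MemLp (fun x => (c * α) * conj (zeta x)) 2 mC := by
      exact (memLp_conj memLp_zeta).const_mul _
    have hC : MemLp (fun x => conj (zeta x) * u x) 2 mC := memLp_conj_zeta_mul huL
    have hAB : MemLp (fun x => conj (zeta x) * ⇑g x - (c * α) * conj (zeta x)) 2 mC := by
      exact hA.sub hB
    have hcC : MemLp (fun x => c * (conj (zeta x) * u x)) 2 mC := by exact hC.const_mul c
    rw [ip_congr_left pe, ip_add_left hAB hcC huh, ip_sub_left hA hB huh]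
    -- term A
    have tA : ip (fun x => conj (zeta x) * ⇑g x) (fun x => u x * ⇑h x) = 0 := by
      set zh : Circ → ℂ := fun x => zeta x * ⇑h x with hzh
      have hzhL : MemLp zh 2 mC := by rw [hzh]; exact memLp_zeta_mul hhL
      have hzhH2 : memH2 zh := by
        intro n hn
        rw [hzh, coeff_zeta_mul]
        exact hh (n - 1) (by omega)
      set zhL : L2C := hzhL.toLp zh with hzhLdef
      have e := hg.2 zhL (memH2_congr hzhL.coeFn_toLp.symm hzhH2)
      have e2 : ip ⇑g (fun x => u x * zh x) = 0 := by
        rw [← e]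
        refine ip_congr_right ?_
        filter_upwards [hzhL.coeFn_toLp] with x hx
        rw [hx]
      rw [← e2, ip, ip]
      congr 1; funext x
      rw [hzh]
      simp only [map_mul]
      ring
    -- term B
    have tB : ip (fun x => (c * α) * conj (zeta x)) (fun x => u x * ⇑h x) = 0 := by
      rw [ip_cmul_left]
      have e1 : ip (fun x => conj (zeta x)) (fun x => u x * ⇑h x)
          = conj (∫ x, zeta x * (u x * ⇑h x) ∂mC) := by
        rw [ip, ← integral_conj]
        congr 1; funext x
        simp only [map_mul, Complex.conj_conj]
      rw [e1, int_zuh hu hhL hh, map_zero, mul_zero]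
    -- term C
    have tC : ip (fun x => conj (zeta x) * u x) (fun x => u x * ⇑h x) = 0 := by
      have e1 : ip (fun x => conj (zeta x) * u x) (fun x => u x * ⇑h x)
          = ∫ x, conj (zeta x * ⇑h x) ∂mC := by
        rw [ip]
        refine integral_congr_ae ?_
        filter_upwards [u_mul_conj_ae hu] with x hx
        simp only [map_mul]
        calc conj (zeta x) * u x * (conj (u x) * conj (⇑h x))
            = (conj (u x) * u x) * (conj (zeta x) * conj (⇑h x)) := by ring
          _ = conj (zeta x) * conj (⇑h x) := by rw [hx, one_mul]
      rw [e1, integral_conj, int_zf, hh (-1) (by norm_num), map_zero]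
    rw [tA, tB, ip_cmul_left, tC, mul_zero]
    ring
  -- ClarkRel
  have hclark : ClarkRel u α fL g := by
    intro k hk
    have hkL : MemLp (⇑k) 2 mC := Lp.memLp k
    have e1 : ip (fun x => zeta x * ⇑fL x) ⇑k
        = ip (fun x => (⇑g x - c * α) + c * u x) ⇑k := by
      refine ip_congr_left ?_
      filter_upwards [hfc] with x hx
      rw [hx, hF]
      calc zeta x * (conj (zeta x) * W x) = zeta x * conj (zeta x) * W x := by ring
        _ = W x := by rw [zeta_mul_conj, one_mul]
    have e2 : ip ⇑fL (fun x => u x * conj (zeta x)) = c := by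
      rw [ip_congr_left hfc]
      have pe : ∀ x, F x * conj (u x * conj (zeta x))
          = ((⇑g x - c * α) + c * u x) * conj (u x) := by
        intro x
        simp only [hF, hW, map_mul, Complex.conj_conj]
        calc conj (zeta x) * ((⇑g x - c * α) + c * u x) * (conj (u x) * zeta x)
            = zeta x * conj (zeta x) * (((⇑g x - c * α) + c * u x) * conj (u x)) := by ring
          _ = ((⇑g x - c * α) + c * u x) * conj (u x) := by rw [zeta_mul_conj, one_mul]
      rw [ip, integral_congr_ae (Filter.Eventually.of_forall pe)]
      have e3 : (∫ x, ((⇑g x - c * α) + c * u x) * conj (u x) ∂mC)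
          = ip (fun x => (⇑g x - c * α) + c * u x) u := rfl
      rw [e3, ip_add_left (by exact hgL.sub (memLp_const _)) (by exact huL.const_mul c) huL,
        ip_sub_left hgL (memLp_const _) huL, ip_const_left, ip_one_u hu0, ip_cmul_left,
        ip_memKu_u hu hg, ip_u_u hu, mul_zero, mul_one]
      ring
    rw [e1, e2, ip_add_left (by exact hgL.sub (memLp_const _)) (by exact huL.const_mul c) hkL,
      ip_sub_left hgL (memLp_const _) hkL, ip_const_left, ip_cmul_left, ip_u_memKu hu hk,
      mul_zero, add_zero]
    ring
  exact ⟨fL, ⟨memH2_congr hfc.symm hFH2, hperp⟩, hclark⟩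

end rest

end ClarkAux

/-- Let `u` be inner with `u(0) = 0` and `α ∈ 𝕋`. The Clark
operator `U_α = S_u + α(1 ⊗ u/z)` on `K_u` — i.e. `U_α f = P_u(zf) + α⟨f, u/z⟩·1`,
characterized here by `ClarkRel` — is a well-defined unitary operator on `K_u`:
every `f ∈ K_u` has a unique image `g ∈ K_u`, the map is isometric, and it is
surjective onto `K_u`. -/
theorem stmt_19 (u : Circ → ℂ) (hu : BdryInner u) (hu0 : fourierCoeff u 0 = 0)
    (α : ℂ) (hα : ‖α‖ = 1) :
    (∀ f : L2C, memKu u f → ∃! g : L2C, memKu u g ∧ ClarkRel u α f g) ∧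
    (∀ f g : L2C, memKu u f → memKu u g → ClarkRel u α f g → ‖g‖ = ‖f‖) ∧
    (∀ g : L2C, memKu u g → ∃ f : L2C, memKu u f ∧ ClarkRel u α f g) := by
  refine ⟨?_, ?_, ?_⟩
  · intro f hf
    obtain ⟨g, ⟨hg, hcr⟩, -⟩ := ClarkAux.forward hu hu0 hf α hα
    refine ⟨g, ⟨hg, hcr⟩, ?_⟩
    rintro g' ⟨hg', hcr'⟩
    exact ClarkAux.unique hu hg' hg hcr' hcr
  · intro f g hf hg hcr
    obtain ⟨g₀, ⟨hg₀, hcr₀⟩, hn⟩ := ClarkAux.forward hu hu0 hf α hα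
    rw [ClarkAux.unique hu hg hg₀ hcr hcr₀]
    exact hn
  · intro g hg
    exact ClarkAux.backward hu hu0 hg α hα
end
end
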